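/- arXiv:1909.07478 — 2 statements merged into one kernel-verified Lean document; each statement's English description precedes it below -/
import Mathlib

section
/- Let S ⊆ T be two markings on a category C and let F : C ⥤ Type u be a functor which commutes with pullbacks along T, i.e. for every t : D ⟶ C in T and every morphism E ⟶ C the canonical map F(D ×_C E) ⟶ F(D) ×_{F(C)} F(E) is a bijection. Then F is an S-cosheaf if and only if F(s) : F(C₀) ⟶ F(C) is surjective for every morphism s : C₀ ⟶ C belonging to S. -/
open CategoryTheory Limits

universe w v u

variable {C : Type u} [Category.{v} C]

/-- A *marking* on a category `C`: a class of morphisms containing all isomorphisms,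
stable under composition, such that pullbacks along its members exist and it is
stable under such pullbacks. -/
structure Marking (S : MorphismProperty C) : Prop where
  of_isIso : ∀ {X Y : C} (f : X ⟶ Y), IsIso f → S f
  comp_mem : ∀ {X Y Z : C} {f : X ⟶ Y} {g : Y ⟶ Z}, S f → S g → S (f ≫ g)
  hasPullback : ∀ {X Y Z : C} (s : X ⟶ Z) (g : Y ⟶ Z), S s → HasPullback s g
  snd_mem : ∀ {X Y Z : C} (s : X ⟶ Z) (g : Y ⟶ Z) (hs : S s),
    letI := hasPullback s g hs
    S (pullback.snd s g)

/-- The iterated fibre powers of a morphism `s : C₀ ⟶ X` of a marking,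
together with their projections to `X`, which again belong to the marking:
`fibrePowerAux n` is the `(n+1)`-fold fibre power `C₀ ×_X ⋯ ×_X C₀`. -/
noncomputable def Marking.fibrePowerAux {S : MorphismProperty C} (hS : Marking S)
    {C₀ X : C} (s : C₀ ⟶ X) (hs : S s) : (n : ℕ) → Σ' (Z : C) (p : Z ⟶ X), S p
  | 0 => ⟨C₀, s, hs⟩
  | n + 1 =>
    let prev := hS.fibrePowerAux s hs n
    letI := hS.hasPullback prev.2.1 s prev.2.2
    ⟨pullback prev.2.1 s, pullback.snd prev.2.1 s ≫ s,
      hS.comp_mem (hS.snd_mem prev.2.1 s prev.2.2) hs⟩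

/-- The `(n+1)`-fold fibre power `C₀ ×_X ⋯ ×_X C₀` of a morphism `s : C₀ ⟶ X`
belonging to a marking. -/
noncomputable def Marking.fibrePower {S : MorphismProperty C} (hS : Marking S)
    {C₀ X : C} (s : C₀ ⟶ X) (hs : S s) (n : ℕ) : C :=
  (hS.fibrePowerAux s hs n).1

/-- The projection from the `(n+1)`-fold fibre power of `s : C₀ ⟶ X` to the base `X`. -/
noncomputable def Marking.fibrePowerHom {S : MorphismProperty C} (hS : Marking S)
    {C₀ X : C} (s : C₀ ⟶ X) (hs : S s) (n : ℕ) : hS.fibrePower s hs n ⟶ X :=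
  (hS.fibrePowerAux s hs n).2.1

/-- A full subcategory (given by a predicate `P` on objects) is *downward closed*
with respect to a marking `S` if whenever `s : C₀ ⟶ X` belongs to `S` and all the
iterated fibre powers `C₀ ×_X ⋯ ×_X C₀` satisfy `P`, then so does `X`. -/
def DownwardClosed {S : MorphismProperty C} (hS : Marking S) (P : C → Prop) : Prop :=
  ∀ {C₀ X : C} (s : C₀ ⟶ X) (hs : S s), (∀ n : ℕ, P (hS.fibrePower s hs n)) → P X

/-- A full subcategory (given by a predicate `P` on objects) is *generating* with
respect to a marking `S` if it is closed under pullbacks along morphisms of `S` and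
the only downward closed full subcategory containing it is the whole category. -/
structure IsGenerating {S : MorphismProperty C} (hS : Marking S) (P : C → Prop) : Prop where
  pullback_mem : ∀ {A B X : C} (s : A ⟶ X) (g : B ⟶ X) (hs : S s),
    P A → P B → P X →
    letI := hS.hasPullback s g hs
    P (pullback s g)
  generates : ∀ Q : C → Prop, DownwardClosed hS Q → (∀ X, P X → Q X) → ∀ X, Q X

/-- The canonical comparison map `F(D ×_X E) ⟶ F(D) ×_{F(X)} F(E)` for a
`Type`-valued functor `F`. -/
noncomputable def comparisonMap (F : C ⥤ Type w) {D E X : C} (t : D ⟶ X) (g : E ⟶ X)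
    [hpb : HasPullback t g] (z : F.obj (pullback t g)) :
    { p : F.obj D × F.obj E // F.map t p.1 = F.map g p.2 } :=
  ⟨(F.map (pullback.fst t g) z, F.map (pullback.snd t g) z), by
    rw [← FunctorToTypes.map_comp_apply, ← FunctorToTypes.map_comp_apply,
      pullback.condition]⟩

/-- A functor `F : C ⥤ Type` is an `S`-cosheaf if for every `s : C₀ ⟶ X` in `S`
the diagram `F(C₀ ×_X C₀) ⇉ F(C₀) ⟶ F(X)` is a coequalizer. -/
def IsCosheaf {S : MorphismProperty C} (hS : Marking S) (F : C ⥤ Type w) : Prop :=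
  ∀ {C₀ X : C} (s : C₀ ⟶ X) (hs : S s),
    letI := hS.hasPullback s s hs
    Nonempty (IsColimit (Cofork.ofπ
      (f := F.map (pullback.fst s s)) (g := F.map (pullback.snd s s)) (F.map s)
      (by rw [← F.map_comp, ← F.map_comp, pullback.condition])))

/-- A functor `F : C ⥤ Type` is `T`-adapted if it commutes with pullbacks along
morphisms of `T`. -/
def IsAdapted {T : MorphismProperty C} (hT : Marking T) (F : C ⥤ Type w) : Prop :=
  ∀ {D E X : C} (t : D ⟶ X) (ht : T t) (g : E ⟶ X),
    Function.Bijective (comparisonMap F t g (hpb := hT.hasPullback t g ht))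

/-- The naturality square of `α : F ⟶ G` at `t : D ⟶ X` is a pullback square of types. -/
def SquareCartesian {F G : C ⥤ Type w} (α : F ⟶ G) {D X : C} (t : D ⟶ X) : Prop :=
  Function.Bijective (fun z : F.obj D =>
    (⟨(F.map t z, α.app D z), (FunctorToTypes.naturality α t z)⟩ :
      { p : F.obj X × G.obj D // α.app X p.1 = G.map t p.2 }))

/-- A natural transformation `α : F ⟶ G` is `T`-cartesian if all its naturality
squares at morphisms of `T` are pullback squares. -/
def IsCartesianNatTrans (T : MorphismProperty C) {F G : C ⥤ Type w} (α : F ⟶ G) : Prop :=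
  ∀ {D X : C} (t : D ⟶ X), T t → SquareCartesian α t

/-- A functor `F : C ⥤ Type` which commutes with pullbacks along a
marking `T ⊇ S` is an `S`-cosheaf if and only if it sends every morphism of `S` to a
surjection. -/
theorem isCosheaf_iff_surjective_of_commutes_with_pullbacks
    {C : Type u} [Category.{v} C] {S T : MorphismProperty C}
    (hS : Marking S) (hT : Marking T) (hST : ∀ {X Y : C} (f : X ⟶ Y), S f → T f)
    (F : C ⥤ Type w)
    (hF : ∀ {D E X : C} (t : D ⟶ X) (ht : T t) (g : E ⟶ X),
      Function.Bijective (comparisonMap F t g (hpb := hT.hasPullback t g ht))) :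
    IsCosheaf hS F ↔
      ∀ {C₀ X : C} (s : C₀ ⟶ X), S s → Function.Surjective (F.map s) := by
  constructor
  · intro hco C₀ X s hs
    letI := hS.hasPullback s s hs
    obtain ⟨h⟩ := hco s hs
    intro x
    -- build two maps out of the colimit that agree after π
    let m₁ : F.obj X ⟶ (ULift.{w} Prop : Type w) :=
      TypeCat.ofHom fun y => ULift.up (∃ a, F.map s a = y)
    let m₂ : F.obj X ⟶ (ULift.{w} Prop : Type w) := TypeCat.ofHom fun _ => ULift.up True
    have heq : m₁ = m₂ := by
      apply Cofork.IsColimit.hom_ext h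
      refine ConcreteCategory.hom_ext _ _ fun a => ?_
      simp only [Cofork.π_ofπ, types_comp_apply, m₁, m₂, TypeCat.ofHom_apply]
      congr 1
      exact eq_true ⟨a, rfl⟩
    have : (∃ a, F.map s a = x) = True := congrArg ULift.down (types_congr_hom heq x)
    exact this ▸ trivial
  · intro hsurj C₀ X s hs
    letI := hS.hasPullback s s hs
    have hcomp := hF s (hST s hs) s
    -- key: points with equal image under F.map s come from the fibre product
    have key : ∀ x y : F.obj C₀, F.map s x = F.map s y →
        ∃ z, F.map (pullback.fst s s) z = x ∧ F.map (pullback.snd s s) z = y := by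
      intro x y hxy
      obtain ⟨z, hz⟩ := hcomp.2 ⟨(x, y), hxy⟩
      have h1 := congrArg (fun p => p.1.1) hz
      have h2 := congrArg (fun p => p.1.2) hz
      exact ⟨z, h1, h2⟩
    refine ⟨Cofork.IsColimit.mk _ (fun t => TypeCat.ofHom fun x =>
      t.π (Function.surjInv (hsurj s hs) x)) ?_ ?_⟩
    · intro t
      refine ConcreteCategory.hom_ext _ _ fun a => ?_
      simp only [types_comp_apply, TypeCat.ofHom_apply]
      obtain ⟨z, hz1, hz2⟩ := key _ a
        (Function.surjInv_eq (hsurj s hs) (F.map s a))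
      have := types_congr_hom t.condition z
      simp only [Cofork.π_ofπ, types_comp_apply] at this
      exact hz1 ▸ hz2 ▸ this
    · intro t m hm
      ext x
      exact (congrArg m (Function.surjInv_eq (hsurj s hs) x)).symm.trans
        (types_congr_hom hm (Function.surjInv (hsurj s hs) x))
end

section
/- Let S ⊆ T be two markings on a category C, let F, G : C ⥤ Type u be functors, and let α : F ⟶ G be a natural transformation which is T-cartesian. If G is a T-adapted S-cosheaf, then F is also a T-adapted S-cosheaf. -/
open CategoryTheory Limits

universe w v u

variable {C : Type u} [Category.{v} C]

section Aux

open CategoryTheory Limits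

private lemma eqvGen_eq_of_coeq {R A W : Type w} {f g : R → A} {m : A → W}
    (hm : ∀ r, m (f r) = m (g r)) {a a' : A}
    (h : Relation.EqvGen (fun x y => ∃ r, f r = x ∧ g r = y) a a') : m a = m a' := by
  induction h with
  | rel x y hxy => obtain ⟨r, rfl, rfl⟩ := hxy; exact hm r
  | refl x => rfl
  | symm x y _ ih => exact ih.symm
  | trans x y z _ _ ih1 ih2 => exact ih1.trans ih2

private noncomputable def typeCofork_isColimit {R A B : Type w} {f g : R ⟶ A} {π : A ⟶ B}
    (hcomm : f ≫ π = g ≫ π)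
    (hsurj : Function.Surjective π)
    (hrel : ∀ a a', π a = π a' → Relation.EqvGen (fun x y => ∃ r, f r = x ∧ g r = y) a a') :
    IsColimit (Cofork.ofπ π hcomm) := by
  refine Cofork.IsColimit.mk _ (fun s => TypeCat.ofHom fun b => s.π ((hsurj b).choose)) (fun s => ?_) (fun s m hm => ?_)
  · ext a
    have h1 : π ((hsurj (π a)).choose) = π a := (hsurj (π a)).choose_spec
    have h2 : ∀ r, s.π (f r) = s.π (g r) := fun r => ConcreteCategory.congr_hom s.condition r
    exact eqvGen_eq_of_coeq h2 (hrel _ _ h1)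
  · ext b
    have h1 : π ((hsurj b).choose) = b := (hsurj b).choose_spec
    have := ConcreteCategory.congr_hom hm ((hsurj b).choose)
    simp only [Cofork.π_ofπ, types_comp_apply] at this ⊢
    conv_lhs => rw [← h1]
    exact this

private lemma typeCofork_surjective {R A B : Type w} {f g : R ⟶ A} {π : A ⟶ B}
    {hcomm : f ≫ π = g ≫ π} (h : IsColimit (Cofork.ofπ π hcomm)) :
    Function.Surjective π := by
  rw [← epi_iff_surjective]
  exact ⟨fun u v huv => Cofork.IsColimit.hom_ext h (by simpa using huv)⟩

private lemma typeCofork_rel {R A B : Type w} {f g : R ⟶ A} {π : A ⟶ B}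
    {hcomm : f ≫ π = g ≫ π} (h : IsColimit (Cofork.ofπ π hcomm)) :
    ∀ a a', π a = π a' → Relation.EqvGen (fun x y => ∃ r, f r = x ∧ g r = y) a a' := by
  intro a a' haa
  set rel : A → A → Prop := fun x y => ∃ r, f r = x ∧ g r = y with hreldef
  have hc : f ≫ (TypeCat.ofHom (Quot.mk rel) : A ⟶ Quot rel) = g ≫ TypeCat.ofHom (Quot.mk rel) := by
    ext r; exact Quot.sound ⟨r, rfl, rfl⟩
  have hu : π ≫ h.desc (Cofork.ofπ (TypeCat.ofHom (Quot.mk rel)) hc) = TypeCat.ofHom (Quot.mk rel) := by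
    simpa using Cofork.IsColimit.π_desc h (t := Cofork.ofπ (TypeCat.ofHom (Quot.mk rel)) hc)
  have : Quot.mk rel a = Quot.mk rel a' := by
    have e1 : (π ≫ h.desc (Cofork.ofπ (TypeCat.ofHom (Quot.mk rel)) hc)) a = Quot.mk rel a :=
      ConcreteCategory.congr_hom hu a
    have e2 : (π ≫ h.desc (Cofork.ofπ (TypeCat.ofHom (Quot.mk rel)) hc)) a' = Quot.mk rel a' :=
      ConcreteCategory.congr_hom hu a'
    rw [← e1, ← e2]
    simp only [types_comp_apply, haa]
  exact Quot.eqvGen_exact this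

private lemma SquareCartesian.inj {F G : C ⥤ Type w} {α : F ⟶ G} {D X : C} {t : D ⟶ X}
    (h : SquareCartesian α t) {a a' : F.obj D} (h1 : F.map t a = F.map t a')
    (h2 : α.app D a = α.app D a') : a = a' :=
  h.injective (Subtype.ext (Prod.ext h1 h2))

private lemma SquareCartesian.lift {F G : C ⥤ Type w} {α : F ⟶ G} {D X : C} {t : D ⟶ X}
    (h : SquareCartesian α t) (x : F.obj X) (d : G.obj D) (hxd : α.app X x = G.map t d) :
    ∃ a, F.map t a = x ∧ α.app D a = d := by
  obtain ⟨a, ha⟩ := h.surjective ⟨(x, d), hxd⟩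
  exact ⟨a, congrArg (fun p => p.1.1) ha, congrArg (fun p => p.1.2) ha⟩

end Aux

/-- Let `S ⊆ T` be markings and `α : F ⟶ G` a `T`-cartesian
natural transformation of `Type`-valued functors. If `G` is a `T`-adapted
`S`-cosheaf, then so is `F`. -/
theorem isAdapted_cosheaf_of_cartesian
    {C : Type u} [Category.{v} C] {S T : MorphismProperty C}
    (hS : Marking S) (hT : Marking T) (hST : ∀ {X Y : C} (f : X ⟶ Y), S f → T f)
    {F G : C ⥤ Type w} (α : F ⟶ G) (hα : IsCartesianNatTrans T α)
    (hGc : IsCosheaf hS G) (hGa : IsAdapted hT G) :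
    IsCosheaf hS F ∧ IsAdapted hT F := by
  have cartInj : ∀ {D X : C} (t : D ⟶ X), T t → ∀ {a a' : F.obj D},
      F.map t a = F.map t a' → α.app D a = α.app D a' → a = a' := by
    intro D X t ht a a' h1 h2; exact (hα t ht).inj h1 h2
  have cartLift : ∀ {D X : C} (t : D ⟶ X), T t → ∀ (x : F.obj X) (d : G.obj D),
      α.app X x = G.map t d → ∃ a, F.map t a = x ∧ α.app D a = d :=
    fun t ht x d hxd => (hα t ht).lift x d hxd
  constructor
  · -- F is an S-cosheaf
    intro C₀ X s hs
    letI := hS.hasPullback s s hs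
    obtain ⟨hG⟩ := hGc s hs
    have hGsurj : Function.Surjective (G.map s) := typeCofork_surjective hG
    have hGrel := typeCofork_rel hG
    have hq : S (pullback.fst s s ≫ s) := by
      rw [pullback.condition]; exact hS.comp_mem (hS.snd_mem s s hs) hs
    have hTs : T s := hST s hs
    have hTq : T (pullback.fst s s ≫ s) := hST _ hq
    refine ⟨typeCofork_isColimit _ ?_ ?_⟩
    · -- surjectivity of F.map s
      intro x
      obtain ⟨b, hb⟩ := hGsurj (α.app X x)
      obtain ⟨a, ha1, _⟩ := cartLift s hTs x b hb.symm
      exact ⟨a, ha1⟩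
    · -- relation
      intro a a' hsa
      have hGG : Relation.EqvGen (fun x y => ∃ z, G.map (pullback.fst s s) z = x ∧
          G.map (pullback.snd s s) z = y) (α.app C₀ a) (α.app C₀ a') := by
        apply hGrel
        rw [← FunctorToTypes.naturality, ← FunctorToTypes.naturality, hsa]
      have hGs : ∀ r, G.map s (G.map (pullback.fst s s) r) = G.map s (G.map (pullback.snd s s) r) := by
        intro r
        rw [← FunctorToTypes.map_comp_apply, ← FunctorToTypes.map_comp_apply, pullback.condition]
      have key : ∀ b b', Relation.EqvGen (fun x y => ∃ z, G.map (pullback.fst s s) z = x ∧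
          G.map (pullback.snd s s) z = y) b b' → ∀ a a' : F.obj C₀,
          α.app C₀ a = b → α.app C₀ a' = b' → F.map s a = F.map s a' →
          Relation.EqvGen (fun x y => ∃ w, F.map (pullback.fst s s) w = x ∧
            F.map (pullback.snd s s) w = y) a a' := by
        intro b b' h
        induction h with
        | rel x y hxy =>
          intro a a' ha ha' hss
          obtain ⟨z, hz1, hz2⟩ := hxy
          have hax : α.app X (F.map s a) = G.map (pullback.fst s s ≫ s) z := by
            rw [FunctorToTypes.naturality, ha, ← hz1, FunctorToTypes.map_comp_apply]
          obtain ⟨w, hw1, hw2⟩ := cartLift _ hTq (F.map s a) z hax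
          have e1 : F.map (pullback.fst s s) w = a := by
            apply cartInj s hTs
            · rw [← FunctorToTypes.map_comp_apply, hw1]
            · rw [FunctorToTypes.naturality, hw2, hz1, ha]
          have e2 : F.map (pullback.snd s s) w = a' := by
            apply cartInj s hTs
            · rw [← FunctorToTypes.map_comp_apply, ← pullback.condition, hw1, hss]
            · rw [FunctorToTypes.naturality, hw2, hz2, ha']
          exact Relation.EqvGen.rel _ _ ⟨w, e1, e2⟩
        | refl x =>
          intro a a' ha ha' hss
          have : a = a' := cartInj s hTs hss (ha.trans ha'.symm)
          exact this ▸ Relation.EqvGen.refl a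
        | symm x y _ ih =>
          intro a a' ha ha' hss
          exact Relation.EqvGen.symm _ _ (ih a' a ha' ha hss.symm)
        | trans x y z hxy _ ih1 ih2 =>
          intro a a'' ha ha'' hss
          have hy : α.app X (F.map s a) = G.map s y := by
            rw [FunctorToTypes.naturality, ha, eqvGen_eq_of_coeq hGs hxy]
          obtain ⟨a', ha'1, ha'2⟩ := cartLift s hTs (F.map s a) y hy
          exact Relation.EqvGen.trans _ _ _ (ih1 a a' ha ha'2 ha'1.symm)
            (ih2 a' a'' ha'2 ha'' (ha'1.trans hss))
      exact key _ _ hGG a a' rfl rfl hsa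
  · -- F is T-adapted
    intro D E X t ht g
    letI := hT.hasPullback t g ht
    have hTsnd : T (pullback.snd t g) := hT.snd_mem t g ht
    constructor
    · intro z z' hzz
      have h1 : F.map (pullback.fst t g) z = F.map (pullback.fst t g) z' :=
        congrArg (fun p => p.1.1) hzz
      have h2 : F.map (pullback.snd t g) z = F.map (pullback.snd t g) z' :=
        congrArg (fun p => p.1.2) hzz
      have hg : α.app _ z = α.app _ z' := by
        apply (hGa t ht g).injective
        apply Subtype.ext
        apply Prod.ext
        · show G.map (pullback.fst t g) _ = G.map (pullback.fst t g) _
          rw [← FunctorToTypes.naturality, ← FunctorToTypes.naturality, h1]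
        · show G.map (pullback.snd t g) _ = G.map (pullback.snd t g) _
          rw [← FunctorToTypes.naturality, ← FunctorToTypes.naturality, h2]
      exact cartInj _ hTsnd h2 hg
    · rintro ⟨⟨d, e⟩, (hde : F.map t d = F.map g e)⟩
      have hGt : G.map t (α.app D d) = G.map g (α.app E e) :=
        (FunctorToTypes.naturality α t d).symm.trans
          (by rw [hde]; exact FunctorToTypes.naturality α g e)
      obtain ⟨w, hw⟩ := (hGa t ht g).surjective ⟨(α.app D d, α.app E e), hGt⟩
      have hw1 : G.map (pullback.fst t g) w = α.app D d := congrArg (fun p => p.1.1) hw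
      have hw2 : G.map (pullback.snd t g) w = α.app E e := congrArg (fun p => p.1.2) hw
      obtain ⟨z, hz1, hz2⟩ := cartLift _ hTsnd e w hw2.symm
      have hz3 : F.map (pullback.fst t g) z = d := by
        apply cartInj t ht
        · rw [← FunctorToTypes.map_comp_apply, pullback.condition,
            FunctorToTypes.map_comp_apply, hz1, hde]
        · rw [FunctorToTypes.naturality, hz2, hw1]
      exact ⟨z, Subtype.ext (Prod.ext hz3 hz1)⟩
end
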